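/- Let h : ℝ^d → ℝ be ρ-weakly convex with ρ ≥ 0, let α > 0 satisfy αρ < 1, let x̃, ν ∈ ℝ^d, and let u = prox_h^{α^{-1}}(x̃ − αν). Then for all x, w ∈ ℝ^d: h(u) ≤ h(x) − ⟨w, u − x⟩ + (α/2)‖w − ν‖² + (ρ/2)‖u − x‖² + (1/(2α))‖x̃ − x‖² − (1/(2α))‖u − x̃‖². -/

import Mathlib

open scoped RealInnerProductSpace

noncomputable section

private lemma combo_sq {E : Type*} [NormedAddCommGroup E] [InnerProductSpace ℝ E]
    (a b : E) (t : ℝ) :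
    ‖(1 - t) • a + t • b‖ ^ 2
      = (1 - t) * ‖a‖ ^ 2 + t * ‖b‖ ^ 2 - t * (1 - t) * ‖a - b‖ ^ 2 := by
  have h1 : ‖a - b‖ ^ 2 = ‖a‖ ^ 2 - 2 * ⟪a, b⟫ + ‖b‖ ^ 2 := norm_sub_sq_real a b
  have h2 : ‖(1 - t) • a + t • b‖ ^ 2
      = ‖(1 - t) • a‖ ^ 2 + 2 * ⟪(1 - t) • a, t • b⟫ + ‖t • b‖ ^ 2 :=
    norm_add_sq_real _ _
  have h3 : ⟪(1 - t) • a, t • b⟫ = (1 - t) * (t * ⟪a, b⟫) := by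
    rw [real_inner_smul_left, real_inner_smul_right]
  have h4 : ‖(1 - t) • a‖ ^ 2 = (1 - t) ^ 2 * ‖a‖ ^ 2 := by
    rw [norm_smul]; rw [Real.norm_eq_abs]; rw [mul_pow, sq_abs]
  have h5 : ‖t • b‖ ^ 2 = t ^ 2 * ‖b‖ ^ 2 := by
    rw [norm_smul]; rw [Real.norm_eq_abs]; rw [mul_pow, sq_abs]
  rw [h2, h3, h4, h5]; linear_combination (t * (1 - t)) * h1

set_option maxHeartbeats 1000000 in
theorem prox_step_descent {d : ℕ} (ρ α : ℝ) (hρ : 0 ≤ ρ) (hα : 0 < α) (hαρ : α * ρ < 1)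
    (h : EuclideanSpace ℝ (Fin d) → ℝ)
    (hwc : ConvexOn ℝ Set.univ (fun z => h z + (ρ / 2) * ‖z‖ ^ 2))
    (xt ν u : EuclideanSpace ℝ (Fin d))
    (hu : ∀ z, h u + (1 / (2 * α)) * ‖u - (xt - α • ν)‖ ^ 2 ≤
      h z + (1 / (2 * α)) * ‖z - (xt - α • ν)‖ ^ 2) :
    ∀ x w : EuclideanSpace ℝ (Fin d),
      h u ≤ h x - ⟪w, u - x⟫ + (α / 2) * ‖w - ν‖ ^ 2 + (ρ / 2) * ‖u - x‖ ^ 2 +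
        (1 / (2 * α)) * ‖xt - x‖ ^ 2 - (1 / (2 * α)) * ‖u - xt‖ ^ 2 := by
  intro x w
  set y : EuclideanSpace ℝ (Fin d) := xt - α • ν with hy
  set c : ℝ := 1 / (2 * α) with hc
  have hcpos : 0 < c := by positivity
  have hca : 2 * α * c = 1 := by rw [hc]; field_simp [hα.ne']
  -- Step A: strengthened minimizer inequality
  have stepA : h u + c * ‖u - y‖ ^ 2 + (c - ρ / 2) * ‖u - x‖ ^ 2
      ≤ h x + c * ‖x - y‖ ^ 2 := by
    have key : ∀ t ∈ Set.Ioo (0:ℝ) 1,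
        h u + c * ‖u - y‖ ^ 2 + (1 - t) * ((c - ρ / 2) * ‖u - x‖ ^ 2)
          ≤ h x + c * ‖x - y‖ ^ 2 := by
      intro t ht
      obtain ⟨ht0, ht1⟩ := ht
      set z : EuclideanSpace ℝ (Fin d) := (1 - t) • u + t • x with hz
      have hg := hwc.2 (Set.mem_univ u) (Set.mem_univ x)
        (by linarith : (0:ℝ) ≤ 1 - t) (le_of_lt ht0) (by ring)
      rw [← hz] at hg
      simp only [smul_eq_mul] at hg
      have hzu := hu z
      have e1 : ‖z‖ ^ 2 = (1 - t) * ‖u‖ ^ 2 + t * ‖x‖ ^ 2 - t * (1 - t) * ‖u - x‖ ^ 2 :=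
        combo_sq u x t
      have e2 : z - y = (1 - t) • (u - y) + t • (x - y) := by
        rw [hz]; module
      have e3 : ‖z - y‖ ^ 2 = (1 - t) * ‖u - y‖ ^ 2 + t * ‖x - y‖ ^ 2
          - t * (1 - t) * ‖u - x‖ ^ 2 := by
        rw [e2]
        have := combo_sq (u - y) (x - y) t
        have e4 : (u - y) - (x - y) = u - x := by abel
        rw [e4] at this
        exact this
      -- hzu : h u + c‖u-y‖² ≤ h z + c‖z-y‖²
      -- hg  : h z + ρ/2‖z‖² ≤ (1-t)(h u + ρ/2‖u‖²) + t(h x + ρ/2‖x‖²)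
      have hcmb : t * (h u + c * ‖u - y‖ ^ 2)
          ≤ t * (h x + c * ‖x - y‖ ^ 2) - t * (1 - t) * ((c - ρ / 2) * ‖u - x‖ ^ 2) := by
        nlinarith [hzu, hg, e1, e3]
      have := mul_le_mul_of_nonneg_left
        (le_of_lt ht0) (le_of_lt ht0)
      nlinarith [hcmb, ht0]
    -- take the limit t → 0⁺
    have tend : Filter.Tendsto
        (fun t : ℝ => h u + c * ‖u - y‖ ^ 2 + (1 - t) * ((c - ρ / 2) * ‖u - x‖ ^ 2))
        (nhdsWithin 0 (Set.Ioi 0))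
        (nhds (h u + c * ‖u - y‖ ^ 2 + (c - ρ / 2) * ‖u - x‖ ^ 2)) := by
      have h1t : Filter.Tendsto (fun t : ℝ => 1 - t) (nhds 0) (nhds 1) := by
        have h' : Filter.Tendsto (fun t : ℝ => t) (nhds (0:ℝ)) (nhds 0) := Filter.tendsto_id
        simpa using h'.const_sub (1:ℝ)
      have hcont := (tendsto_const_nhds (x := h u + c * ‖u - y‖ ^ 2)
        (f := nhds (0:ℝ))).add (h1t.mul_const ((c - ρ / 2) * ‖u - x‖ ^ 2))
      rw [one_mul] at hcont
      exact hcont.mono_left nhdsWithin_le_nhds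
    refine le_of_tendsto tend ?_
    have hioo : Set.Ioo (0:ℝ) 1 ∈ nhdsWithin (0:ℝ) (Set.Ioi 0) :=
      Ioo_mem_nhdsGT_of_mem (by constructor <;> norm_num)
    filter_upwards [hioo] with t ht using key t ht
  -- Step B: expand and finish
  have f1 : ‖u - y‖ ^ 2 = ‖u - xt‖ ^ 2 + 2 * (α * ⟪u - xt, ν⟫) + α ^ 2 * ‖ν‖ ^ 2 := by
    have : u - y = (u - xt) + α • ν := by rw [hy]; abel
    rw [this, norm_add_sq_real, real_inner_smul_right, norm_smul, Real.norm_eq_abs,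
      mul_pow, sq_abs]
  have f2 : ‖x - y‖ ^ 2 = ‖x - xt‖ ^ 2 + 2 * (α * ⟪x - xt, ν⟫) + α ^ 2 * ‖ν‖ ^ 2 := by
    have : x - y = (x - xt) + α • ν := by rw [hy]; abel
    rw [this, norm_add_sq_real, real_inner_smul_right, norm_smul, Real.norm_eq_abs,
      mul_pow, sq_abs]
  have f3 : (0:ℝ) ≤ ‖α • (w - ν) - (u - x)‖ ^ 2 := sq_nonneg _
  have f4 : ‖α • (w - ν) - (u - x)‖ ^ 2
      = α ^ 2 * ‖w - ν‖ ^ 2 - 2 * (α * ⟪w - ν, u - x⟫) + ‖u - x‖ ^ 2 := by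
    rw [norm_sub_sq_real, real_inner_smul_left, norm_smul, Real.norm_eq_abs, mul_pow, sq_abs]
  have f5 : ⟪w - ν, u - x⟫ = ⟪w, u - x⟫ - ⟪ν, u - x⟫ := inner_sub_left _ _ _
  have f6 : ⟪ν, u - x⟫ = ⟪u - xt, ν⟫ - ⟪x - xt, ν⟫ := by
    rw [← inner_sub_left]
    have : (u - xt) - (x - xt) = u - x := by abel
    rw [this, real_inner_comm]
  have f7 : ‖xt - x‖ = ‖x - xt‖ := norm_sub_rev _ _
  rw [f7]
  rw [f4] at f3
  nlinarith [stepA, f1, f2, f3, f5, f6, hcpos, hca, mul_pos hα hcpos]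

end
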